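/- Let ξ ∈ 𝔰𝔢_N(3) with rotational block S (the top-left 3×3 skew-symmetric block of ξ) and let θ ≥ 0 be defined by θ² = (1/2)·tr(Sᵀ S) (so θ = ‖ω‖ for the rotation vector ω with ω^∧ = S). Then the adjoint operator ad_ξ satisfies the polynomial identity ad_ξ⁵(η) + 2θ²·ad_ξ³(η) + θ⁴·ad_ξ(η) = 0 for every η ∈ 𝔰𝔢_N(3). -/
import Mathlib


/-- The adjoint operator `ad_ξ : η ↦ ξ*η - η*ξ` on `d × d` real matrices. -/
noncomputable def adM {d : ℕ} (x : Matrix (Fin d) (Fin d) ℝ) :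
    Module.End ℝ (Matrix (Fin d) (Fin d) ℝ) :=
  LinearMap.mulLeft ℝ x - LinearMap.mulRight ℝ x

/-- Membership in the Lie algebra `𝔰𝔢_N(3)`: a `(3+N) × (3+N)` real matrix whose last
`N` rows vanish and whose top-left `3 × 3` block is skew-symmetric. -/
def mem_seN (N : ℕ) (ξ : Matrix (Fin (3 + N)) (Fin (3 + N)) ℝ) : Prop :=
  (∀ i j : Fin (3 + N), 3 ≤ (i : ℕ) → ξ i j = 0) ∧
  (∀ i j : Fin (3 + N), (i : ℕ) < 3 → (j : ℕ) < 3 → ξ j i = - ξ i j)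

/-- The rotational block `S`: the top-left `3 × 3` block of `ξ`. -/
def rotBlock (N : ℕ) (ξ : Matrix (Fin (3 + N)) (Fin (3 + N)) ℝ) :
    Matrix (Fin 3) (Fin 3) ℝ :=
  ξ.submatrix (Fin.castAdd N) (Fin.castAdd N)

/-- cross product -/
def crossV (x y : Fin 3 → ℝ) : Fin 3 → ℝ :=
  ![x 1 * y 2 - x 2 * y 1, x 2 * y 0 - x 0 * y 2, x 0 * y 1 - x 1 * y 0]

def rotvec (N : ℕ) (x : Matrix (Fin (3 + N)) (Fin (3 + N)) ℝ) : Fin 3 → ℝ :=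
  ![x (Fin.castAdd N 2) (Fin.castAdd N 1), x (Fin.castAdd N 0) (Fin.castAdd N 2),
    x (Fin.castAdd N 1) (Fin.castAdd N 0)]

def colv (N : ℕ) (x : Matrix (Fin (3 + N)) (Fin (3 + N)) ℝ) (j : Fin (3 + N)) : Fin 3 → ℝ :=
  fun i => x (Fin.castAdd N i) j

def hatM (w : Fin 3 → ℝ) : Matrix (Fin 3) (Fin 3) ℝ :=
  !![0, -w 2, w 1; w 2, 0, -w 0; -w 1, w 0, 0]

lemma adM_apply {d : ℕ} (x y : Matrix (Fin d) (Fin d) ℝ) : adM x y = x * y - y * x := by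
  simp [adM]

lemma castAdd_coe_lt {N : ℕ} (i : Fin 3) : ((Fin.castAdd N i : Fin (3 + N)) : ℕ) < 3 := by
  simp [i.isLt]

lemma entry_block {N : ℕ} {x : Matrix (Fin (3 + N)) (Fin (3 + N)) ℝ} (hx : mem_seN N x)
    (i j : Fin 3) : x (Fin.castAdd N i) (Fin.castAdd N j) = hatM (rotvec N x) i j := by
  have hs : ∀ p q : Fin 3, x (Fin.castAdd N p) (Fin.castAdd N q)
      = - x (Fin.castAdd N q) (Fin.castAdd N p) :=
    fun p q => hx.2 (Fin.castAdd N q) (Fin.castAdd N p) (castAdd_coe_lt q) (castAdd_coe_lt p)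
  fin_cases i <;> fin_cases j <;> simp [hatM, rotvec] <;>
    first
    | rfl
    | linarith [hs 0 0, hs 0 1, hs 0 2, hs 1 1, hs 1 2, hs 2 2, hs 1 0, hs 2 0, hs 2 1]

lemma sum_reduce {N : ℕ} (A B : Matrix (Fin (3 + N)) (Fin (3 + N)) ℝ)
    (hB : ∀ i j : Fin (3 + N), 3 ≤ (i : ℕ) → B i j = 0) (r : Fin (3 + N)) (j : Fin (3 + N)) :
    (∑ k, A r k * B k j) = ∑ k : Fin 3, A r (Fin.castAdd N k) * B (Fin.castAdd N k) j := by
  rw [Fin.sum_univ_add]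
  have : ∀ k : Fin N, A r (Fin.natAdd 3 k) * B (Fin.natAdd 3 k) j = 0 := by
    intro k
    rw [hB (Fin.natAdd 3 k) j (by simp), mul_zero]
  simp [this]

lemma mul_entry_swap {N : ℕ} {A B : Matrix (Fin (3 + N)) (Fin (3 + N)) ℝ}
    (hA : mem_seN N A) (hB : mem_seN N B) (p q : Fin (3 + N))
    (hp : (p : ℕ) < 3) (hq : (q : ℕ) < 3) : (A * B) q p = (B * A) p q := by
  rw [Matrix.mul_apply, Matrix.mul_apply]
  apply Finset.sum_congr rfl
  intro k _
  by_cases hk : (k : ℕ) < 3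
  · rw [hA.2 k q hk hq, hB.2 p k hp hk]; ring
  · rw [hA.1 k q (le_of_not_gt hk), hB.1 k p (le_of_not_gt hk)]; ring

lemma mem_seN_adM {N : ℕ} {ξ η : Matrix (Fin (3 + N)) (Fin (3 + N)) ℝ}
    (hξ : mem_seN N ξ) (hη : mem_seN N η) : mem_seN N (adM ξ η) := by
  rw [adM_apply]
  constructor
  · intro i j hi
    have h1 : ∀ k, ξ i k = 0 := fun k => hξ.1 i k hi
    have h2 : ∀ k, η i k = 0 := fun k => hη.1 i k hi
    simp [Matrix.sub_apply, Matrix.mul_apply, h1, h2]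
  · intro i j hi hj
    simp only [Matrix.sub_apply]
    rw [mul_entry_swap hξ hη i j hi hj, mul_entry_swap hη hξ i j hi hj]
    ring

lemma bracket_entry {N : ℕ} {ξ η : Matrix (Fin (3 + N)) (Fin (3 + N)) ℝ}
    (hξ : mem_seN N ξ) (hη : mem_seN N η) (i : Fin 3) (j : Fin (3 + N)) :
    (adM ξ η) (Fin.castAdd N i) j
      = crossV (rotvec N ξ) (colv N η j) i - crossV (rotvec N η) (colv N ξ j) i := by
  rw [adM_apply]
  simp only [Matrix.sub_apply, Matrix.mul_apply]
  rw [sum_reduce ξ η hη.1, sum_reduce η ξ hξ.1]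
  have e1 : ∀ k : Fin 3, ξ (Fin.castAdd N i) (Fin.castAdd N k) = hatM (rotvec N ξ) i k :=
    entry_block hξ i
  have e2 : ∀ k : Fin 3, η (Fin.castAdd N i) (Fin.castAdd N k) = hatM (rotvec N η) i k :=
    entry_block hη i
  simp only [e1, e2]
  fin_cases i <;>
    simp [Fin.sum_univ_three, hatM, crossV, colv] <;> ring

lemma colv_cast {N : ℕ} {x : Matrix (Fin (3 + N)) (Fin (3 + N)) ℝ} (hx : mem_seN N x)
    (j : Fin 3) : colv N x (Fin.castAdd N j) = fun k => hatM (rotvec N x) k j :=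
  funext fun k => entry_block hx k j

lemma rot_bracket {N : ℕ} {ξ η : Matrix (Fin (3 + N)) (Fin (3 + N)) ℝ}
    (hξ : mem_seN N ξ) (hη : mem_seN N η) :
    rotvec N (adM ξ η) = crossV (rotvec N ξ) (rotvec N η) := by
  have h1 := bracket_entry hξ hη 2 (Fin.castAdd N 1)
  have h2 := bracket_entry hξ hη 0 (Fin.castAdd N 2)
  have h3 := bracket_entry hξ hη 1 (Fin.castAdd N 0)
  funext k
  fin_cases k
  · show (adM ξ) η (Fin.castAdd N 2) (Fin.castAdd N 1) = _
    rw [h1]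
    simp [colv_cast hξ, colv_cast hη, crossV, hatM, rotvec]
    ring
  · show (adM ξ) η (Fin.castAdd N 0) (Fin.castAdd N 2) = _
    rw [h2]
    simp [colv_cast hξ, colv_cast hη, crossV, hatM, rotvec]
    ring
  · show (adM ξ) η (Fin.castAdd N 1) (Fin.castAdd N 0) = _
    rw [h3]
    simp [colv_cast hξ, colv_cast hη, crossV, hatM, rotvec]
    ring

lemma col_bracket {N : ℕ} {ξ η : Matrix (Fin (3 + N)) (Fin (3 + N)) ℝ}
    (hξ : mem_seN N ξ) (hη : mem_seN N η) (j : Fin (3 + N)) :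
    colv N (adM ξ η) j
      = fun k => crossV (rotvec N ξ) (colv N η j) k - crossV (rotvec N η) (colv N ξ j) k :=
  funext fun k => bracket_entry hξ hη k j

lemma trace_eq {N : ℕ} {ξ : Matrix (Fin (3 + N)) (Fin (3 + N)) ℝ} (hξ : mem_seN N ξ) :
    Matrix.trace ((rotBlock N ξ).transpose * rotBlock N ξ)
      = 2 * ((rotvec N ξ 0) ^ 2 + (rotvec N ξ 1) ^ 2 + (rotvec N ξ 2) ^ 2) := by
  have e : ∀ i j : Fin 3, rotBlock N ξ i j = hatM (rotvec N ξ) i j := by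
    intro i j; exact entry_block hξ i j
  simp [Matrix.trace, Matrix.diag, Matrix.mul_apply, Fin.sum_univ_three,
    Matrix.transpose_apply, e, hatM]
  ring

/-- **Characteristic polynomial identity for `ad_ξ` on `𝔰𝔢_N(3)`.** For
`ξ ∈ 𝔰𝔢_N(3)` with rotational block `S` and `θ ≥ 0` with `θ² = (1/2)·tr(Sᵀ S)`, one
has `ad_ξ⁵ η + 2θ²·ad_ξ³ η + θ⁴·ad_ξ η = 0` for every `η ∈ 𝔰𝔢_N(3)`. -/
theorem ad_quintic_identity_seN (N : ℕ) (ξ : Matrix (Fin (3 + N)) (Fin (3 + N)) ℝ)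
    (hξ : mem_seN N ξ) (θ : ℝ) (hθ : 0 ≤ θ)
    (hθ_sq : θ ^ 2 = (1 / 2) * Matrix.trace ((rotBlock N ξ).transpose * rotBlock N ξ)) :
    ∀ η : Matrix (Fin (3 + N)) (Fin (3 + N)) ℝ, mem_seN N η →
      (adM ξ ^ 5) η + (2 * θ ^ 2) • ((adM ξ ^ 3) η) + θ ^ 4 • (adM ξ η) = 0 := by
  intro η hη
  have hθ2 : θ ^ 2 = (rotvec N ξ 0) ^ 2 + (rotvec N ξ 1) ^ 2 + (rotvec N ξ 2) ^ 2 := by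
    rw [hθ_sq, trace_eq hξ]; ring
  have hθ4 : θ ^ 4 = ((rotvec N ξ 0) ^ 2 + (rotvec N ξ 1) ^ 2 + (rotvec N ξ 2) ^ 2) ^ 2 := by
    rw [show θ ^ 4 = (θ ^ 2) ^ 2 by ring, hθ2]
  have m1 : mem_seN N (adM ξ η) := mem_seN_adM hξ hη
  have m2 : mem_seN N (adM ξ (adM ξ η)) := mem_seN_adM hξ m1
  have m3 : mem_seN N (adM ξ (adM ξ (adM ξ η))) := mem_seN_adM hξ m2
  have m4 : mem_seN N (adM ξ (adM ξ (adM ξ (adM ξ η)))) := mem_seN_adM hξ m3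
  have m5 : mem_seN N (adM ξ (adM ξ (adM ξ (adM ξ (adM ξ η))))) := mem_seN_adM hξ m4
  have e5 : (adM ξ ^ 5) η = adM ξ (adM ξ (adM ξ (adM ξ (adM ξ η)))) := by
    simp [pow_succ, Module.End.mul_apply]
  have e3 : (adM ξ ^ 3) η = adM ξ (adM ξ (adM ξ η)) := by
    simp [pow_succ, Module.End.mul_apply]
  rw [e5, e3]
  ext i j
  simp only [Matrix.add_apply, Matrix.smul_apply, Matrix.zero_apply, smul_eq_mul]
  rcases Nat.lt_or_ge (i : ℕ) 3 with hi | hi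
  · obtain ⟨i', rfl⟩ : ∃ i' : Fin 3, i = Fin.castAdd N i' :=
      ⟨⟨(i : ℕ), hi⟩, Fin.ext (by simp)⟩
    rw [bracket_entry hξ m4 i' j, bracket_entry hξ m2 i' j, bracket_entry hξ hη i' j]
    simp only [col_bracket hξ hη, col_bracket hξ m1, col_bracket hξ m2, col_bracket hξ m3,
      rot_bracket hξ hη, rot_bracket hξ m1, rot_bracket hξ m2, rot_bracket hξ m3]
    set ω := rotvec N ξ
    set a := rotvec N η
    set v := colv N ξ j
    set b := colv N η j
    rw [hθ2, hθ4]
    fin_cases i' <;>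
      simp [crossV] <;> ring
  · have z : ∀ μ : Matrix (Fin (3 + N)) (Fin (3 + N)) ℝ, mem_seN N μ → μ i j = 0 :=
      fun μ hμ => hμ.1 i j hi
    rw [z _ m5, z _ m3, z _ m1]
    ring
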